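/- The language L_{∨,c} = { w ∈ {a,b,c}* : |w|_c = 1 and |w|_a = |w|_b } ∪ { w ∈ {a,b}* : 2·|w|_a = |w|_b } is not accepted by any DFAwtl. -/

import Mathlib

/-- A nondeterministic finite automaton with translucent letters (NFAwtl). -/
structure NFAwtl (Q α : Type) where
  τ : Q → Set α
  I : Set Q
  F : Set Q
  δ : Q → α → Set Q
  tr : ∀ q a, a ∈ τ q → δ q a = ∅

namespace NFAwtl

variable {Q α : Type}

/-- One computation step of an NFAwtl: delete the leftmost non-translucent letter
and change state (the head returns to the left end). -/
def Step (A : NFAwtl Q α) : Q × List α → Q × List α → Prop := fun c c' =>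
  ∃ u a v, c.2 = u ++ a :: v ∧ (∀ x ∈ u, x ∈ A.τ c.1) ∧ a ∉ A.τ c.1 ∧
    c'.1 ∈ A.δ c.1 a ∧ c'.2 = u ++ v

/-- Acceptance: from some initial state, reach a configuration whose remaining
letters are all translucent for a final state. -/
def Accepts (A : NFAwtl Q α) (w : List α) : Prop :=
  ∃ q₀ ∈ A.I, ∃ q w', Relation.ReflTransGen A.Step (q₀, w) (q, w') ∧
    (∀ x ∈ w', x ∈ A.τ q) ∧ q ∈ A.F

def lang (A : NFAwtl Q α) : Set (List α) := { w | A.Accepts w }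

/-- A DFAwtl: single initial state and at most one transition per state/letter. -/
def Deterministic (A : NFAwtl Q α) : Prop :=
  (∃ q₀, A.I = {q₀}) ∧ ∀ q a, (A.δ q a).Subsingleton

end NFAwtl

/-- A repetitive NFAwtl (RNFAwtl): on the end-of-tape marker it may accept
(states in `Facc`) or change state via `δend` and continue. -/
structure RNFAwtl (Q α : Type) where
  τ : Q → Set α
  I : Set Q
  δ : Q → α → Set Q
  δend : Q → Set Q
  Facc : Set Q
  tr : ∀ q a, a ∈ τ q → δ q a = ∅
  accEnd : ∀ q, q ∈ Facc → δend q = ∅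

namespace RNFAwtl

variable {Q α : Type}

/-- One computation step of an RNFAwtl: either delete the leftmost
non-translucent letter, or, when all remaining letters are translucent,
change state via a `◁`-transition and continue. -/
def Step (A : RNFAwtl Q α) : Q × List α → Q × List α → Prop := fun c c' =>
  (∃ u a v, c.2 = u ++ a :: v ∧ (∀ x ∈ u, x ∈ A.τ c.1) ∧ a ∉ A.τ c.1 ∧
    c'.1 ∈ A.δ c.1 a ∧ c'.2 = u ++ v)
  ∨ ((∀ x ∈ c.2, x ∈ A.τ c.1) ∧ c'.1 ∈ A.δend c.1 ∧ c'.2 = c.2)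

def Accepts (A : RNFAwtl Q α) (w : List α) : Prop :=
  ∃ q₀ ∈ A.I, ∃ q w', Relation.ReflTransGen A.Step (q₀, w) (q, w') ∧
    (∀ x ∈ w', x ∈ A.τ q) ∧ q ∈ A.Facc

def lang (A : RNFAwtl Q α) : Set (List α) := { w | A.Accepts w }

/-- An RDFAwtl: single initial state and deterministic transitions. -/
def Deterministic (A : RNFAwtl Q α) : Prop :=
  (∃ q₀, A.I = {q₀}) ∧ (∀ q a, (A.δ q a).Subsingleton) ∧ ∀ q, (A.δend q).Subsingleton

end RNFAwtl

/-- A non-returning repetitive NFAwtl (nr-NFAwtl): the head continues from the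
position of the last deleted letter; on the end-of-tape marker it may change
state and return the head to the left end. -/
structure NrNFAwtl (Q α : Type) where
  τ : Q → Set α
  I : Set Q
  δ : Q → α → Set Q
  δend : Q → Set Q
  Facc : Set Q
  tr : ∀ q a, a ∈ τ q → δ q a = ∅
  accEnd : ∀ q, q ∈ Facc → δend q = ∅

namespace NrNFAwtl

variable {Q α : Type}

/-- Configurations are `(x, q, w)`: `x` is the already-skipped prefix, the head
is on the first letter of `w`. -/
def Step (A : NrNFAwtl Q α) :
    List α × Q × List α → List α × Q × List α → Prop := fun c c' =>
  (∃ u a v, c.2.2 = u ++ a :: v ∧ (∀ x ∈ u, x ∈ A.τ c.2.1) ∧ a ∉ A.τ c.2.1 ∧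
    c'.2.1 ∈ A.δ c.2.1 a ∧ c'.1 = c.1 ++ u ∧ c'.2.2 = v)
  ∨ ((∀ x ∈ c.2.2, x ∈ A.τ c.2.1) ∧ c'.2.1 ∈ A.δend c.2.1 ∧ c'.1 = [] ∧
    c'.2.2 = c.1 ++ c.2.2)

def Accepts (A : NrNFAwtl Q α) (w : List α) : Prop :=
  ∃ q₀ ∈ A.I, ∃ x q w', Relation.ReflTransGen A.Step ([], q₀, w) (x, q, w') ∧
    (∀ y ∈ w', y ∈ A.τ q) ∧ q ∈ A.Facc

def lang (A : NrNFAwtl Q α) : Set (List α) := { w | A.Accepts w }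

def Deterministic (A : NrNFAwtl Q α) : Prop :=
  (∃ q₀, A.I = {q₀}) ∧ (∀ q a, (A.δ q a).Subsingleton) ∧ ∀ q, (A.δend q).Subsingleton

end NrNFAwtl

/-- A non-repetitive non-returning NFAwtl (nr-nr-NFAwtl): non-returning, and it
must halt as soon as all remaining letters to the right are translucent. -/
structure NrnrNFAwtl (Q α : Type) where
  τ : Q → Set α
  I : Set Q
  F : Set Q
  δ : Q → α → Set Q
  tr : ∀ q a, a ∈ τ q → δ q a = ∅

namespace NrnrNFAwtl

variable {Q α : Type}

def Step (A : NrnrNFAwtl Q α) :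
    List α × Q × List α → List α × Q × List α → Prop := fun c c' =>
  ∃ u a v, c.2.2 = u ++ a :: v ∧ (∀ x ∈ u, x ∈ A.τ c.2.1) ∧ a ∉ A.τ c.2.1 ∧
    c'.2.1 ∈ A.δ c.2.1 a ∧ c'.1 = c.1 ++ u ∧ c'.2.2 = v

def Accepts (A : NrnrNFAwtl Q α) (w : List α) : Prop :=
  ∃ q₀ ∈ A.I, ∃ x q w', Relation.ReflTransGen A.Step ([], q₀, w) (x, q, w') ∧
    (∀ y ∈ w', y ∈ A.τ q) ∧ q ∈ A.F

def lang (A : NrnrNFAwtl Q α) : Set (List α) := { w | A.Accepts w }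

def Deterministic (A : NrnrNFAwtl Q α) : Prop :=
  (∃ q₀, A.I = {q₀}) ∧ ∀ q a, (A.δ q a).Subsingleton

end NrnrNFAwtl

/-- Language classes. -/
def NFAwtlLangs (α : Type) [Fintype α] : Set (Set (List α)) :=
  { L | ∃ (Q : Type) (_ : Fintype Q) (A : NFAwtl Q α), A.lang = L }

def DFAwtlLangs (α : Type) [Fintype α] : Set (Set (List α)) :=
  { L | ∃ (Q : Type) (_ : Fintype Q) (A : NFAwtl Q α), A.Deterministic ∧ A.lang = L }

def RNFAwtlLangs (α : Type) [Fintype α] : Set (Set (List α)) :=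
  { L | ∃ (Q : Type) (_ : Fintype Q) (A : RNFAwtl Q α), A.lang = L }

def RDFAwtlLangs (α : Type) [Fintype α] : Set (Set (List α)) :=
  { L | ∃ (Q : Type) (_ : Fintype Q) (A : RNFAwtl Q α), A.Deterministic ∧ A.lang = L }

def NrNFAwtlLangs (α : Type) [Fintype α] : Set (Set (List α)) :=
  { L | ∃ (Q : Type) (_ : Fintype Q) (A : NrNFAwtl Q α), A.lang = L }

def NrDFAwtlLangs (α : Type) [Fintype α] : Set (Set (List α)) :=
  { L | ∃ (Q : Type) (_ : Fintype Q) (A : NrNFAwtl Q α), A.Deterministic ∧ A.lang = L }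

def NrnrNFAwtlLangs (α : Type) [Fintype α] : Set (Set (List α)) :=
  { L | ∃ (Q : Type) (_ : Fintype Q) (A : NrnrNFAwtl Q α), A.lang = L }

def NrnrDFAwtlLangs (α : Type) [Fintype α] : Set (Set (List α)) :=
  { L | ∃ (Q : Type) (_ : Fintype Q) (A : NrnrNFAwtl Q α), A.Deterministic ∧ A.lang = L }

/-- The three-letter alphabet {a, b, c}. -/
inductive Al : Type
  | a | b | c
deriving DecidableEq

instance : Fintype Al where
  elems := {Al.a, Al.b, Al.c}
  complete := by intro x; cases x <;> simp

/-- The language L_{∨,c} = { w ∈ {a,b,c}* : |w|_c = 1, |w|_a = |w|_b }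
    ∪ { w ∈ {a,b}* : 2·|w|_a = |w|_b }. -/
def Lvc : Set (List Al) :=
  { w | w.count Al.c = 1 ∧ w.count Al.a = w.count Al.b } ∪
  { w | Al.c ∉ w ∧ 2 * w.count Al.a = w.count Al.b }

section LvcAux
open Relation

namespace LvcProof

/-- canonical word `a^i b^j c^e` -/
def wd (i j : ℕ) (e : Bool) : List Al :=
  List.replicate i Al.a ++ (List.replicate j Al.b ++ (if e then [Al.c] else []))

lemma count_wd_a (i j : ℕ) (e : Bool) : (wd i j e).count Al.a = i := by
  simp [wd, List.count_append, List.count_replicate]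
  cases e <;> simp

lemma count_wd_b (i j : ℕ) (e : Bool) : (wd i j e).count Al.b = j := by
  simp [wd, List.count_append, List.count_replicate]
  cases e <;> simp

lemma count_wd_c (i j : ℕ) (e : Bool) : (wd i j e).count Al.c = if e then 1 else 0 := by
  simp [wd, List.count_append, List.count_replicate]
  cases e <;> simp

lemma c_mem_wd (i j : ℕ) (e : Bool) : Al.c ∈ wd i j e ↔ e = true := by
  rw [← List.count_pos_iff, count_wd_c]
  cases e <;> simp

lemma wd_inj {i j i' j' : ℕ} {e e' : Bool} (h : wd i j e = wd i' j' e') :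
    i = i' ∧ j = j' ∧ e = e' := by
  refine ⟨?_, ?_, ?_⟩
  · rw [← count_wd_a i j e, h, count_wd_a]
  · rw [← count_wd_b i j e, h, count_wd_b]
  · have := congrArg (List.count Al.c) h
    rw [count_wd_c, count_wd_c] at this
    cases e <;> cases e' <;> simp_all

lemma mem_wd {x : Al} {i j : ℕ} {e : Bool} (h : x ∈ wd i j e) :
    (x = Al.a ∧ 0 < i) ∨ (x = Al.b ∧ 0 < j) ∨ (x = Al.c ∧ e = true) := by
  simp only [wd, List.mem_append] at h
  rcases h with h | h | h
  · left; rcases List.eq_of_mem_replicate h with rfl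
    refine ⟨rfl, ?_⟩
    rcases i with _|i
    · simp at h
    · omega
  · right; left; rcases List.eq_of_mem_replicate h with rfl
    refine ⟨rfl, ?_⟩
    rcases j with _|j
    · simp at h
    · omega
  · right; right
    cases e with
    | false => simp at h
    | true => simp at h; exact ⟨h, rfl⟩

lemma wd_mem_Lvc_true (i j : ℕ) : wd i j true ∈ Lvc ↔ i = j := by
  constructor
  · rintro (⟨_, h2⟩ | ⟨h1, _⟩)
    · rwa [count_wd_a, count_wd_b] at h2
    · exact absurd ((c_mem_wd i j true).mpr rfl) h1
  · intro h
    left; exact ⟨by rw [count_wd_c]; simp, by rw [count_wd_a, count_wd_b]; exact h⟩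

lemma wd_mem_Lvc_false (i j : ℕ) : wd i j false ∈ Lvc ↔ 2 * i = j := by
  constructor
  · rintro (⟨h1, _⟩ | ⟨_, h2⟩)
    · rw [count_wd_c] at h1; simp at h1
    · rwa [count_wd_a, count_wd_b] at h2
  · intro h
    right
    exact ⟨by rw [c_mem_wd]; simp, by rw [count_wd_a, count_wd_b]; exact h⟩

end LvcProof
end LvcAux
namespace LvcProof
open Relation

variable {Q : Type} (A : NFAwtl Q Al)

def Rch (x y : Q × List Al) : Prop := Relation.ReflTransGen A.Step x y

def NoStep (x : Q × List Al) : Prop := ∀ y, ¬ A.Step x y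

def StallAt (q : Q) (i j : ℕ) (e : Bool) : Prop :=
  (i = 0 ∨ Al.a ∈ A.τ q) ∧ (j = 0 ∨ Al.b ∈ A.τ q) ∧ (e = true → Al.c ∈ A.τ q)

variable {A}

lemma stall_transl {q : Q} {i j : ℕ} {e : Bool} (h : StallAt A q i j e) :
    ∀ x ∈ wd i j e, x ∈ A.τ q := by
  intro x hx
  rcases mem_wd hx with ⟨rfl, hi⟩ | ⟨rfl, hj⟩ | ⟨rfl, he⟩
  · rcases h.1 with h0 | h0
    · omega
    · exact h0
  · rcases h.2.1 with h0 | h0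
    · omega
    · exact h0
  · exact h.2.2 he

lemma transl_noStep {q : Q} {w : List Al} (h : ∀ x ∈ w, x ∈ A.τ q) :
    NoStep A (q, w) := by
  rintro y ⟨u, x, v, hw, _, hx, _, _⟩
  replace hw : w = u ++ x :: v := hw
  exact hx (h x (by rw [hw]; simp))

lemma stall_noStep {q : Q} {i j : ℕ} {e : Bool} (h : StallAt A q i j e) :
    NoStep A (q, wd i j e) := transl_noStep (stall_transl h)

lemma stepA {q q' : Q} {i j : ℕ} {e : Bool} (ha : Al.a ∉ A.τ q)
    (hq : q' ∈ A.δ q Al.a) : A.Step (q, wd (i + 1) j e) (q', wd i j e) := by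
  refine ⟨[], Al.a, wd i j e, ?_, by simp, ha, hq, by simp⟩
  simp [wd, List.replicate_succ]

lemma stepB {q q' : Q} {i j : ℕ} {e : Bool} (ha : i = 0 ∨ Al.a ∈ A.τ q)
    (hb : Al.b ∉ A.τ q) (hq : q' ∈ A.δ q Al.b) :
    A.Step (q, wd i (j + 1) e) (q', wd i j e) := by
  refine ⟨List.replicate i Al.a, Al.b,
    List.replicate j Al.b ++ (if e then [Al.c] else []), ?_, ?_, hb, hq, ?_⟩
  · simp [wd, List.replicate_succ]
  · intro x hx
    rcases List.eq_of_mem_replicate hx with rfl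
    rcases ha with h0 | h0
    · subst h0; simp at hx
    · exact h0
  · simp [wd]

lemma stepC {q q' : Q} {i j : ℕ} (ha : i = 0 ∨ Al.a ∈ A.τ q)
    (hb : j = 0 ∨ Al.b ∈ A.τ q) (hc : Al.c ∉ A.τ q) (hq : q' ∈ A.δ q Al.c) :
    A.Step (q, wd i j true) (q', wd i j false) := by
  refine ⟨List.replicate i Al.a ++ List.replicate j Al.b, Al.c, [], ?_, ?_, hc, hq, ?_⟩
  · simp [wd]
  · intro x hx
    rcases List.mem_append.mp hx with h | h
    · rcases List.eq_of_mem_replicate h with rfl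
      rcases ha with h0 | h0
      · subst h0; simp at h
      · exact h0
    · rcases List.eq_of_mem_replicate h with rfl
      rcases hb with h0 | h0
      · subst h0; simp at h
      · exact h0
  · simp [wd]

lemma leftmost_unique {T : Set Al} {u₁ v₁ u₂ v₂ : List Al} {x₁ x₂ : Al}
    (h : u₁ ++ x₁ :: v₁ = u₂ ++ x₂ :: v₂)
    (h₁ : ∀ y ∈ u₁, y ∈ T) (hx₁ : x₁ ∉ T)
    (h₂ : ∀ y ∈ u₂, y ∈ T) (hx₂ : x₂ ∉ T) :
    u₁ = u₂ ∧ x₁ = x₂ ∧ v₁ = v₂ := by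
  induction u₁ generalizing u₂ with
  | nil =>
    cases u₂ with
    | nil => simp at h; exact ⟨rfl, h.1, h.2⟩
    | cons y u₂' =>
      simp at h
      exact absurd (h₂ y (by simp)) (h.1 ▸ hx₁)
  | cons y u₁' ih =>
    cases u₂ with
    | nil =>
      simp at h
      exact absurd (h₁ y (by simp)) (h.1 ▸ hx₂)
    | cons z u₂' =>
      simp at h
      obtain ⟨rfl, h'⟩ := h
      obtain ⟨e1, e2, e3⟩ := ih h' (fun t ht => h₁ t (by simp [ht]))
        (fun t ht => h₂ t (by simp [ht]))
      exact ⟨by rw [e1], e2, e3⟩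

/-- inversion of a step out of a canonical config -/
lemma step_inv {q : Q} {i j : ℕ} {e : Bool} {z : Q × List Al}
    (h : A.Step (q, wd i j e) z) :
    (∃ q' i0, i = i0 + 1 ∧ Al.a ∉ A.τ q ∧ q' ∈ A.δ q Al.a ∧ z = (q', wd i0 j e)) ∨
    (∃ q' j0, j = j0 + 1 ∧ (i = 0 ∨ Al.a ∈ A.τ q) ∧ Al.b ∉ A.τ q ∧ q' ∈ A.δ q Al.b ∧
      z = (q', wd i j0 e)) ∨
    (∃ q', e = true ∧ (i = 0 ∨ Al.a ∈ A.τ q) ∧ (j = 0 ∨ Al.b ∈ A.τ q) ∧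
      Al.c ∉ A.τ q ∧ q' ∈ A.δ q Al.c ∧ z = (q', wd i j false)) := by
  obtain ⟨u, x, v, hw, hu, hx, hq, hz⟩ := h
  replace hw : wd i j e = u ++ x :: v := hw
  replace hu : ∀ y ∈ u, y ∈ A.τ q := hu
  replace hx : x ∉ A.τ q := hx
  replace hq : z.1 ∈ A.δ q x := hq
  by_cases hA : i ≠ 0 ∧ Al.a ∉ A.τ q
  · left
    obtain ⟨hi, ha⟩ := hA
    obtain ⟨i0, rfl⟩ : ∃ i0, i = i0 + 1 := ⟨i - 1, by omega⟩
    have hcan : wd (i0 + 1) j e = [] ++ Al.a :: wd i0 j e := by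
      simp [wd, List.replicate_succ]
    obtain ⟨e1, e2, e3⟩ := leftmost_unique (hw.symm.trans hcan).symm
      (by simp) ha hu hx
    refine ⟨z.1, i0, rfl, ha, ?_, ?_⟩
    · rw [← e2] at hq; exact hq
    · have : z.2 = wd i0 j e := by rw [hz, e1.symm, e3.symm]; simp
      exact Prod.ext rfl this
  · push_neg at hA
    have hA' : i = 0 ∨ Al.a ∈ A.τ q := by
      by_cases h0 : i = 0
      · exact Or.inl h0
      · exact Or.inr (hA h0)
    by_cases hB : j ≠ 0 ∧ Al.b ∉ A.τ q
    · right; left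
      obtain ⟨hj, hb⟩ := hB
      obtain ⟨j0, rfl⟩ : ∃ j0, j = j0 + 1 := ⟨j - 1, by omega⟩
      have hcan : wd i (j0 + 1) e =
          List.replicate i Al.a ++ Al.b :: (List.replicate j0 Al.b ++ (if e then [Al.c] else [])) := by
        simp [wd, List.replicate_succ]
      have hums : ∀ y ∈ List.replicate i Al.a, y ∈ A.τ q := by
        intro y hy
        rcases List.eq_of_mem_replicate hy with rfl
        rcases hA' with h0 | h0
        · subst h0; simp at hy
        · exact h0
      obtain ⟨e1, e2, e3⟩ := leftmost_unique (hw.symm.trans hcan).symm hums hb hu hx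
      refine ⟨z.1, j0, rfl, hA', hb, ?_, ?_⟩
      · rw [← e2] at hq; exact hq
      · have : z.2 = wd i j0 e := by rw [hz, e1.symm, e3.symm]; simp [wd]
        exact Prod.ext rfl this
    · push_neg at hB
      have hB' : j = 0 ∨ Al.b ∈ A.τ q := by
        by_cases h0 : j = 0
        · exact Or.inl h0
        · exact Or.inr (hB h0)
      -- the only non-translucent letter could be c; if e = false or c translucent, contradiction
      by_cases hC : e = true ∧ Al.c ∉ A.τ q
      · right; right
        obtain ⟨he, hc⟩ := hC
        subst he
        have hcan : wd i j true =
            (List.replicate i Al.a ++ List.replicate j Al.b) ++ Al.c :: [] := by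
          simp [wd]
        have hums : ∀ y ∈ List.replicate i Al.a ++ List.replicate j Al.b, y ∈ A.τ q := by
          intro y hy
          rcases List.mem_append.mp hy with h0 | h0
          · rcases List.eq_of_mem_replicate h0 with rfl
            rcases hA' with h1 | h1
            · subst h1; simp at h0
            · exact h1
          · rcases List.eq_of_mem_replicate h0 with rfl
            rcases hB' with h1 | h1
            · subst h1; simp at h0
            · exact h1
        obtain ⟨e1, e2, e3⟩ := leftmost_unique (hw.symm.trans hcan).symm hums hc hu hx
        refine ⟨z.1, rfl, hA', hB', hc, ?_, ?_⟩
        · rw [← e2] at hq; exact hq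
        · have : z.2 = wd i j false := by
            rw [hz, e1.symm, e3.symm]; simp [wd]
          exact Prod.ext rfl this
      · -- all letters translucent: contradiction with existence of x
        exfalso
        have hst : StallAt A q i j e := by
          refine ⟨hA', hB', ?_⟩
          intro he
          by_contra hcn
          exact hC ⟨he, hcn⟩
        exact hx (stall_transl hst x (by rw [hw]; simp))


lemma step_det (hdet : A.Deterministic) {q : Q} {i j : ℕ} {e : Bool}
    {z₁ z₂ : Q × List Al} (h₁ : A.Step (q, wd i j e) z₁) (h₂ : A.Step (q, wd i j e) z₂) :
    z₁ = z₂ := by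
  have hs := hdet.2
  rcases step_inv h₁ with ⟨q₁, i1, hi1, ha1, hq1, hz1⟩ | ⟨q₁, j1, hj1, ha1, hb1, hq1, hz1⟩ |
      ⟨q₁, he1, ha1, hb1, hc1, hq1, hz1⟩ <;>
    rcases step_inv h₂ with ⟨q₂, i2, hi2, ha2, hq2, hz2⟩ | ⟨q₂, j2, hj2, ha2, hb2, hq2, hz2⟩ |
      ⟨q₂, he2, ha2, hb2, hc2, hq2, hz2⟩
  · have : i1 = i2 := by omega
    subst this
    rw [hz1, hz2, hs q Al.a hq1 hq2]
  · rcases ha2 with h0 | h0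
    · omega
    · exact absurd h0 ha1
  · rcases ha2 with h0 | h0
    · omega
    · exact absurd h0 ha1
  · rcases ha1 with h0 | h0
    · omega
    · exact absurd h0 ha2
  · have : j1 = j2 := by omega
    subst this
    rw [hz1, hz2, hs q Al.b hq1 hq2]
  · rcases hb2 with h0 | h0
    · omega
    · exact absurd h0 hb1
  · rcases ha1 with h0 | h0
    · omega
    · exact absurd h0 ha2
  · rcases hb1 with h0 | h0
    · omega
    · exact absurd h0 hb2
  · rw [hz1, hz2, hs q Al.c hq1 hq2]

end LvcProof
namespace LvcProof
open Relation

variable {Q : Type} {A : NFAwtl Q Al}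

lemma shape_reach :
    ∀ {x y : Q × List Al}, Relation.ReflTransGen A.Step x y →
      ∀ q i j e, x = (q, wd i j e) →
      ∃ q' i' j' e', y = (q', wd i' j' e') ∧ i' ≤ i ∧ j' ≤ j ∧ (e' = true → e = true) := by
  intro x y h
  induction h using Relation.ReflTransGen.head_induction_on with
  | refl =>
    intro q i j e hx
    exact ⟨q, i, j, e, hx, le_refl _, le_refl _, fun h => h⟩
  | head hstep hrest ih =>
    intro q i j e hx
    subst hx
    rcases step_inv hstep with ⟨q₁, i0, hi, _, _, hz⟩ | ⟨q₁, j0, hj, _, _, _, hz⟩ |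
        ⟨q₁, he, _, _, _, _, hz⟩
    · obtain ⟨q', i', j', e', hy, h1, h2, h3⟩ := ih q₁ i0 j e hz
      exact ⟨q', i', j', e', hy, by omega, h2, h3⟩
    · obtain ⟨q', i', j', e', hy, h1, h2, h3⟩ := ih q₁ i j0 e hz
      exact ⟨q', i', j', e', hy, h1, by omega, h3⟩
    · subst he
      obtain ⟨q', i', j', e', hy, h1, h2, h3⟩ := ih q₁ i j false hz
      exact ⟨q', i', j', e', hy, h1, h2, fun hh => by simp [h3 hh] at *⟩

lemma reach_counts {q q' : Q} {i j i' j' : ℕ} {e e' : Bool}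
    (h : Rch A (q, wd i j e) (q', wd i' j' e')) :
    i' ≤ i ∧ j' ≤ j ∧ (e' = true → e = true) := by
  obtain ⟨q2, i2, j2, e2, heq, h1, h2, h3⟩ := shape_reach h q i j e rfl
  obtain ⟨hq, hw⟩ := Prod.mk.injEq _ _ _ _ ▸ heq
  obtain ⟨rfl, rfl, rfl⟩ := wd_inj hw
  exact ⟨h1, h2, h3⟩

lemma couple (s t : ℕ) {q' : Q} {i' j' : ℕ}
    (hs : 0 < s → 1 ≤ i') (ht : 0 < t → 1 ≤ j') :
    ∀ {x : Q × List Al}, Relation.ReflTransGen A.Step x (q', wd i' j' false) →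
      ∀ q i j, x = (q, wd i j false) →
      Rch A (q, wd (i + s) (j + t) false) (q', wd (i' + s) (j' + t) false) := by
  intro x h
  induction h using Relation.ReflTransGen.head_induction_on with
  | refl =>
    intro q i j hx
    obtain ⟨hq, hw⟩ := Prod.mk.injEq _ _ _ _ ▸ hx
    obtain ⟨rfl, rfl, -⟩ := wd_inj hw
    subst hq
    exact Relation.ReflTransGen.refl
  | head hstep hrest ih =>
    intro q i j hx
    subst hx
    rcases step_inv hstep with ⟨q₁, i0, hi, ha, hq, hz⟩ | ⟨q₁, j0, hj, ha, hb, hq, hz⟩ |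
        ⟨q₁, he, _, _, _, _, hz⟩
    · subst hi
      have harith : i0 + 1 + s = (i0 + s) + 1 := by omega
      rw [harith]
      exact Relation.ReflTransGen.head (stepA ha hq) (ih q₁ i0 j hz)
    · subst hj
      have ha' : i + s = 0 ∨ Al.a ∈ A.τ q := by
        rcases ha with h0 | h0
        · subst h0
          left
          by_contra hne
          have hs' : 0 < s := by omega
          have : i' ≤ 0 := by
            have := (reach_counts (show Rch A (q₁, wd 0 j0 false) (q', wd i' j' false) from hz ▸ hrest)).1
            omega
          have := hs hs'
          omega
        · exact Or.inr h0
      have harith : j0 + 1 + t = (j0 + t) + 1 := by omega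
      rw [harith]
      exact Relation.ReflTransGen.head (stepB ha' hb hq) (ih q₁ i j0 hz)
    · exact absurd he (by simp)

lemma mapc :
    ∀ {x y : Q × List Al}, Relation.ReflTransGen A.Step x y →
      ∀ q i j q' i' j', x = (q, wd i j false) → y = (q', wd i' j' false) →
      Rch A (q, wd i j true) (q', wd i' j' true) := by
  intro x y h
  induction h using Relation.ReflTransGen.head_induction_on with
  | refl =>
    intro q i j q' i' j' hx hy
    rw [hx] at hy
    obtain ⟨hq, hw⟩ := Prod.mk.injEq _ _ _ _ ▸ hy
    obtain ⟨rfl, rfl, -⟩ := wd_inj hw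
    subst hq
    exact Relation.ReflTransGen.refl
  | head hstep hrest ih =>
    intro q i j q' i' j' hx hy
    subst hx
    rcases step_inv hstep with ⟨q₁, i0, hi, ha, hq, hz⟩ | ⟨q₁, j0, hj, ha, hb, hq, hz⟩ |
        ⟨q₁, he, _, _, _, _, hz⟩
    · subst hi
      exact Relation.ReflTransGen.head (stepA ha hq) (ih q₁ i0 j q' i' j' hz hy)
    · subst hj
      exact Relation.ReflTransGen.head (stepB ha hb hq) (ih q₁ i j0 q' i' j' hz hy)
    · exact absurd he (by simp)

def WdC (x : Q × List Al) : Prop := ∃ q i j e, x = (q, wd i j e)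

lemma wdc_step {x z : Q × List Al} (hx : WdC x) (h : A.Step x z) : WdC z := by
  obtain ⟨q, i, j, e, rfl⟩ := hx
  rcases step_inv h with ⟨q₁, i0, _, _, _, hz⟩ | ⟨q₁, j0, _, _, _, _, hz⟩ |
      ⟨q₁, _, _, _, _, _, hz⟩
  · exact ⟨q₁, i0, j, e, hz⟩
  · exact ⟨q₁, i, j0, e, hz⟩
  · exact ⟨q₁, i, j, false, hz⟩

lemma det_to_term (hdet : A.Deterministic) {z : Q × List Al} (hz : NoStep A z) :
    ∀ {x y : Q × List Al}, Relation.ReflTransGen A.Step x y →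
      Relation.ReflTransGen A.Step x z → WdC x →
      Relation.ReflTransGen A.Step y z := by
  intro x y h
  induction h using Relation.ReflTransGen.head_induction_on with
  | refl => intro hxz _; exact hxz
  | head hstep hrest ih =>
    intro hxz hwd
    rcases Relation.ReflTransGen.cases_head hxz with h0 | ⟨z₁, hz₁, hz₂⟩
    · subst h0
      exact absurd hstep (hz _)
    · obtain ⟨q, i, j, e, rfl⟩ := hwd
      have : z₁ = _ := step_det hdet hz₁ hstep
      subst this
      exact ih hz₂ (wdc_step ⟨q, i, j, e, rfl⟩ hstep)

lemma det_confluence (hdet : A.Deterministic) :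
    ∀ {x y z : Q × List Al}, Relation.ReflTransGen A.Step x y →
      Relation.ReflTransGen A.Step x z → WdC x →
      Relation.ReflTransGen A.Step y z ∨ Relation.ReflTransGen A.Step z y := by
  intro x y z h
  induction h using Relation.ReflTransGen.head_induction_on with
  | refl => intro hxz _; exact Or.inl hxz
  | head hstep hrest ih =>
    intro hxz hwd
    rcases Relation.ReflTransGen.cases_head hxz with h0 | ⟨z₁, hz₁, hz₂⟩
    · subst h0
      exact Or.inr (Relation.ReflTransGen.head hstep hrest)
    · obtain ⟨q, i, j, e, rfl⟩ := hwd
      have heq : z₁ = _ := step_det hdet hz₁ hstep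
      subst heq
      exact ih hz₂ (wdc_step ⟨q, i, j, e, rfl⟩ hstep)

lemma term_unique (hdet : A.Deterministic) {x y z : Q × List Al}
    (hy : Relation.ReflTransGen A.Step x y) (hz : Relation.ReflTransGen A.Step x z)
    (hty : NoStep A y) (htz : NoStep A z) (hwd : WdC x) : y = z := by
  have h := det_to_term hdet htz hy hz hwd
  rcases Relation.ReflTransGen.cases_head h with h0 | ⟨z₁, hz₁, _⟩
  · exact h0
  · exact absurd hz₁ (hty _)

lemma exists_term_aux :
    ∀ n (q : Q) i j (e : Bool), i + j + (cond e 1 0) ≤ n →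
      ∃ q' i' j' e', Rch A (q, wd i j e) (q', wd i' j' e') ∧ NoStep A (q', wd i' j' e') := by
  intro n
  induction n with
  | zero =>
    intro q i j e h
    cases e with
    | true =>
      exfalso
      simp only [Bool.cond_true] at h
      omega
    | false =>
    simp only [Bool.cond_false] at h
    have hi : i = 0 := by omega
    have hj : j = 0 := by omega
    subst hi; subst hj
    refine ⟨q, 0, 0, false, Relation.ReflTransGen.refl, transl_noStep ?_⟩
    intro x hx
    simp [wd] at hx
  | succ n ih =>
    intro q i j e h
    by_cases hstep : ∃ z, A.Step (q, wd i j e) z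
    · obtain ⟨z, hz⟩ := hstep
      rcases step_inv hz with ⟨q₁, i0, hi, _, _, hzz⟩ | ⟨q₁, j0, hj, _, _, _, hzz⟩ |
          ⟨q₁, he, _, _, _, _, hzz⟩
      · subst hi
        obtain ⟨q', i', j', e', hr, ht⟩ := ih q₁ i0 j e (by cases e <;> simp only [Bool.cond_true, Bool.cond_false] at h ⊢ <;> omega)
        exact ⟨q', i', j', e', Relation.ReflTransGen.head (hzz ▸ hz) hr, ht⟩
      · subst hj
        obtain ⟨q', i', j', e', hr, ht⟩ := ih q₁ i j0 e (by cases e <;> simp only [Bool.cond_true, Bool.cond_false] at h ⊢ <;> omega)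
        exact ⟨q', i', j', e', Relation.ReflTransGen.head (hzz ▸ hz) hr, ht⟩
      · subst he
        obtain ⟨q', i', j', e', hr, ht⟩ := ih q₁ i j false (by simp only [Bool.cond_true, Bool.cond_false] at h ⊢; omega)
        exact ⟨q', i', j', e', Relation.ReflTransGen.head (hzz ▸ hz) hr, ht⟩
    · push_neg at hstep
      exact ⟨q, i, j, e, Relation.ReflTransGen.refl, fun z => hstep z⟩

lemma exists_term (q : Q) (i j : ℕ) (e : Bool) :
    ∃ q' i' j' e', Rch A (q, wd i j e) (q', wd i' j' e') ∧ NoStep A (q', wd i' j' e') :=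
  exists_term_aux (i + j + (cond e 1 0)) q i j e (le_refl _)

lemma transl_stall {q : Q} {i j : ℕ} {e : Bool}
    (h : ∀ x ∈ wd i j e, x ∈ A.τ q) : StallAt A q i j e := by
  refine ⟨?_, ?_, ?_⟩
  · rcases i with _ | i0
    · exact Or.inl rfl
    · exact Or.inr (h Al.a (by simp [wd, List.replicate_succ]))
  · rcases j with _ | j0
    · exact Or.inl rfl
    · exact Or.inr (h Al.b (by simp [wd, List.replicate_succ]))
  · intro he
    exact h Al.c ((c_mem_wd i j e).mpr he)

lemma accept_iff (hdet : A.Deterministic) {q₀ : Q} (hI : A.I = {q₀})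
    {i j : ℕ} {e : Bool} {p : Q} {x y : ℕ} {e' : Bool}
    (hr : Rch A (q₀, wd i j e) (p, wd x y e')) (hterm : NoStep A (p, wd x y e')) :
    (wd i j e ∈ A.lang) ↔ (StallAt A p x y e' ∧ p ∈ A.F) := by
  constructor
  · rintro ⟨p₀, hp₀, p₂, w₂, hr₂, htr₂, hF₂⟩
    have hp : p₀ = q₀ := by rw [hI] at hp₀; exact hp₀
    rw [hp] at hr₂
    have hns₂ : NoStep A (p₂, w₂) := transl_noStep htr₂
    have heq : (p, wd x y e') = (p₂, w₂) :=
      term_unique hdet hr hr₂ hterm hns₂ ⟨q₀, i, j, e, rfl⟩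
    obtain ⟨hp2, hw2⟩ := Prod.mk.injEq _ _ _ _ ▸ heq
    subst hp2
    subst hw2
    exact ⟨transl_stall (fun u hu => htr₂ u hu), hF₂⟩
  · rintro ⟨hst, hF⟩
    show A.Accepts (wd i j e)
    refine ⟨q₀, ?_, p, wd x y e', hr, stall_transl hst, hF⟩
    rw [hI]
    rfl

end LvcProof
namespace LvcProof
open Relation

variable {Q : Type} {A : NFAwtl Q Al} {q₀ : Q}

lemma rch_congr {q q' : Q} {i j i' j' i2 j2 i2' j2' : ℕ} {e e' : Bool}
    (h : Rch A (q, wd i j e) (q', wd i' j' e'))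
    (h1 : i = i2) (h2 : j = j2) (h3 : i' = i2') (h4 : j' = j2') :
    Rch A (q, wd i2 j2 e) (q', wd i2' j2' e') := by
  have e1 : (q, wd i j e) = (q, wd i2 j2 e) := by rw [h1, h2]
  have e2 : (q', wd i' j' e') = (q', wd i2' j2' e') := by rw [h3, h4]
  rw [← e1, ← e2]
  exact h

lemma noStep_b_ext {p : Q} {x y t : ℕ} (h : NoStep A (p, wd x (y + 1) false)) :
    NoStep A (p, wd x (y + 1 + t) false) := by
  rintro z hz
  rcases step_inv hz with ⟨q', i0, hi, ha, hq, -⟩ | ⟨q', j0, hj, ha, hb, hq, -⟩ |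
      ⟨q', he, -, -, -, -, -⟩
  · subst hi
    exact h _ (stepA ha hq)
  · exact h _ (stepB ha hb hq)
  · exact absurd he (by simp)

lemma P1 (hdet : A.Deterministic) (hI : A.I = {q₀}) (hlang : A.lang = Lvc)
    {m j x y : ℕ} {p : Q} {e' : Bool} (hj : j ≤ 2 * m)
    (hr : Rch A (q₀, wd m j false) (p, wd x y e')) (hT : NoStep A (p, wd x y e')) :
    y = 0 ∧ e' = false := by
  have he' : e' = false := by
    have h3 := (reach_counts hr).2.2
    cases e' with
    | false => rfl
    | true => exact absurd (h3 rfl) (by simp)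
  subst he'
  refine ⟨?_, rfl⟩
  by_contra hy0
  obtain ⟨y0, rfl⟩ : ∃ y0, y = y0 + 1 := ⟨y - 1, by omega⟩
  have hcoup : ∀ t, Rch A (q₀, wd m (j + t) false) (p, wd x (y0 + 1 + t) false) := by
    intro t
    have h := couple 0 t (by omega) (fun _ => by omega) hr q₀ m j rfl
    exact rch_congr h (by omega) rfl (by omega) rfl
  have hNS : ∀ t, NoStep A (p, wd x (y0 + 1 + t) false) := fun t => noStep_b_ext hT
  have hmem : ∀ t, (2 * m = j + t) ↔ (StallAt A p x (y0 + 1 + t) false ∧ p ∈ A.F) := by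
    intro t
    have h := accept_iff hdet hI (hcoup t) (hNS t)
    rw [hlang, wd_mem_Lvc_false] at h
    exact h
  have h1 := (hmem (2 * m - j)).mp (by omega)
  have h2 : StallAt A p x (y0 + 1 + (2 * m - j + 1)) false := by
    obtain ⟨⟨ha, hb, -⟩, -⟩ := h1
    refine ⟨ha, ?_, by simp⟩
    rcases hb with h0 | h0
    · omega
    · exact Or.inr h0
  have := (hmem (2 * m - j + 1)).mpr ⟨h2, h1.2⟩
  omega

lemma decomp :
    ∀ {x y : Q × List Al}, Relation.ReflTransGen A.Step x y →
      ∀ (q p : Q) i j X, x = (q, wd i (j + 1) false) → y = (p, wd X 0 false) →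
      ∃ σ' α σ, Rch A (q, wd i (j + 1) false) (σ', wd α 1 false) ∧
        (α = 0 ∨ Al.a ∈ A.τ σ') ∧ Al.b ∉ A.τ σ' ∧ σ ∈ A.δ σ' Al.b := by
  intro x y h
  induction h using Relation.ReflTransGen.head_induction_on with
  | refl =>
    intro q p i j X hx hy
    rw [hx] at hy
    obtain ⟨-, hw⟩ := Prod.mk.injEq _ _ _ _ ▸ hy
    obtain ⟨-, hj, -⟩ := wd_inj hw
    omega
  | head hstep hrest ih =>
    intro q p i j X hx hy
    subst hx
    rcases step_inv hstep with ⟨q₁, i0, hi, ha, hq, hz⟩ | ⟨q₁, j0, hj, ha, hb, hq, hz⟩ |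
        ⟨q₁, he, -, -, -, -, -⟩
    · subst hi
      subst hz
      obtain ⟨σ', α, σ, hr1, hd1, hd2, hd3⟩ := ih q₁ p i0 j X rfl hy
      exact ⟨σ', α, σ, Relation.ReflTransGen.head hstep hr1, hd1, hd2, hd3⟩
    · have hjj : j0 = j := by omega
      subst hjj
      subst hz
      rcases j0 with _ | j1
      · exact ⟨q, i, q₁, Relation.ReflTransGen.refl, ha, hb, hq⟩
      · obtain ⟨σ', α, σ, hr1, hd1, hd2, hd3⟩ := ih q₁ p i j1 X rfl hy
        exact ⟨σ', α, σ, Relation.ReflTransGen.head hstep hr1, hd1, hd2, hd3⟩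
    · exact absurd he (by simp)

lemma diag (hdet : A.Deterministic) (hI : A.I = {q₀}) (hlang : A.lang = Lvc)
    (m : ℕ) (hm : 1 ≤ m) :
    ∃ σ' α σ, Rch A (q₀, wd m m false) (σ', wd α 1 false) ∧
      (α = 0 ∨ Al.a ∈ A.τ σ') ∧ Al.b ∉ A.τ σ' ∧ σ ∈ A.δ σ' Al.b := by
  obtain ⟨p, x, y, e', hr, hT⟩ := exists_term q₀ m m false
  obtain ⟨hy, he'⟩ := P1 hdet hI hlang (by omega) hr hT
  subst hy
  subst he'
  obtain ⟨m0, rfl⟩ : ∃ m0, m = m0 + 1 := ⟨m - 1, by omega⟩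
  exact decomp hr q₀ p (m0 + 1) m0 x rfl rfl

lemma preB {m α : ℕ} {σ' σ : Q}
    (pre : Rch A (q₀, wd m m false) (σ', wd α 1 false))
    (hao : α = 0 ∨ Al.a ∈ A.τ σ') (hb : Al.b ∉ A.τ σ') (hδ : σ ∈ A.δ σ' Al.b)
    (s t : ℕ) (hs : 0 < s → 1 ≤ α) :
    Rch A (q₀, wd (m + s) (m + t) false) (σ, wd (α + s) t false) := by
  have h1 := couple s t hs (fun _ => le_refl 1) pre q₀ m m rfl
  have h1' : Rch A (q₀, wd (m + s) (m + t) false) (σ', wd (α + s) (t + 1) false) :=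
    rch_congr h1 rfl rfl rfl (by omega)
  have hao' : α + s = 0 ∨ Al.a ∈ A.τ σ' := by
    rcases hao with h0 | h0
    · subst h0
      left
      by_cases hs0 : 0 < s
      · exact absurd (hs hs0) (by omega)
      · omega
    · exact Or.inr h0
  exact Relation.ReflTransGen.tail h1' (stepB hao' hb hδ)

def AccV (A : NFAwtl Q Al) (q : Q) (α : ℕ) : Prop :=
  ∃ p x e, Rch A (q, wd α 0 true) (p, wd x 0 e) ∧ StallAt A p x 0 e ∧ p ∈ A.F

lemma ACC2 (hdet : A.Deterministic) (hI : A.I = {q₀}) (hlang : A.lang = Lvc)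
    {i j α : ℕ} {σ : Q} (hr : Rch A (q₀, wd i j true) (σ, wd α 0 true)) :
    ((wd i j true) ∈ Lvc) ↔ AccV A σ α := by
  obtain ⟨p, x, y, e, hrT, hT⟩ := exists_term σ α 0 true
  have hy : y = 0 := by
    have := (reach_counts hrT).2.1
    omega
  subst hy
  have hiff := accept_iff hdet hI (hr.trans hrT) hT
  rw [hlang] at hiff
  rw [hiff]
  constructor
  · rintro ⟨hst, hF⟩
    exact ⟨p, x, e, hrT, hst, hF⟩
  · rintro ⟨p₂, x₂, e₂, hr₂, hst₂, hF₂⟩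
    have heq : (p, wd x 0 e) = (p₂, wd x₂ 0 e₂) :=
      term_unique hdet hrT hr₂ hT (stall_noStep hst₂) ⟨σ, α, 0, true, rfl⟩
    obtain ⟨h1, h2⟩ := Prod.mk.injEq _ _ _ _ ▸ heq
    obtain ⟨rfl, -, rfl⟩ := wd_inj h2
    subst h1
    exact ⟨hst₂, hF₂⟩

lemma caseB (hdet : A.Deterministic) (hI : A.I = {q₀}) (hlang : A.lang = Lvc)
    {m₁ m₂ : ℕ} {σ₁' σ₂' sg : Q} (hlt : m₁ < m₂)
    (pre₁ : Rch A (q₀, wd m₁ m₁ false) (σ₁', wd 0 1 false))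
    (hb₁ : Al.b ∉ A.τ σ₁') (hδ₁ : sg ∈ A.δ σ₁' Al.b)
    (pre₂ : Rch A (q₀, wd m₂ m₂ false) (σ₂', wd 0 1 false))
    (hb₂ : Al.b ∉ A.τ σ₂') (hδ₂ : sg ∈ A.δ σ₂' Al.b) : False := by
  have R1 := preB pre₁ (Or.inl rfl) hb₁ hδ₁ 0 m₁ (by omega)
  have R2 := preB pre₂ (Or.inl rfl) hb₂ hδ₂ 0 m₁ (by omega)
  have R1' : Rch A (q₀, wd m₁ (m₁ + m₁) false) (sg, wd 0 m₁ false) :=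
    rch_congr R1 (by omega) rfl (by omega) rfl
  have R2' : Rch A (q₀, wd m₂ (m₂ + m₁) false) (sg, wd 0 m₁ false) :=
    rch_congr R2 (by omega) rfl (by omega) rfl
  obtain ⟨r, xr, yr, er, hrT, hT⟩ := exists_term sg 0 m₁ false
  have h1 := accept_iff hdet hI (R1'.trans hrT) hT
  have h2 := accept_iff hdet hI (R2'.trans hrT) hT
  rw [hlang, wd_mem_Lvc_false] at h1 h2
  have := h2.mpr (h1.mp (by omega))
  omega

lemma caseA (hdet : A.Deterministic) (hI : A.I = {q₀}) (hlang : A.lang = Lvc)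
    {m₁ m₂ α₁ α₂ : ℕ} {σ₁' σ₂' sg : Q} (hlt : m₁ < m₂)
    (hα₁ : 1 ≤ α₁) (hα₂ : 1 ≤ α₂)
    (pre₁ : Rch A (q₀, wd m₁ m₁ false) (σ₁', wd α₁ 1 false))
    (hao₁ : α₁ = 0 ∨ Al.a ∈ A.τ σ₁') (hb₁ : Al.b ∉ A.τ σ₁') (hδ₁ : sg ∈ A.δ σ₁' Al.b)
    (pre₂ : Rch A (q₀, wd m₂ m₂ false) (σ₂', wd α₂ 1 false))
    (hao₂ : α₂ = 0 ∨ Al.a ∈ A.τ σ₂') (hb₂ : Al.b ∉ A.τ σ₂') (hδ₂ : sg ∈ A.δ σ₂' Al.b) :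
    False := by
  obtain ⟨d, hd1, hd⟩ : ∃ d, 1 ≤ d ∧ m₂ = m₁ + d := ⟨m₂ - m₁, by omega, by omega⟩
  subst hd
  -- two views of the run on a^(m₁+d) b^(2m₁+2d)
  have C₁ : Rch A (q₀, wd (m₁ + d) (2 * m₁ + 2 * d) false)
      (sg, wd (α₁ + d) (m₁ + 2 * d) false) :=
    rch_congr (preB pre₁ hao₁ hb₁ hδ₁ d (m₁ + 2 * d) (fun _ => hα₁))
      (by omega) (by omega) rfl rfl
  have C₂ : Rch A (q₀, wd (m₁ + d) (2 * m₁ + 2 * d) false)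
      (sg, wd α₂ (m₁ + d) false) :=
    rch_congr (preB pre₂ hao₂ hb₂ hδ₂ 0 (m₁ + d) (by omega))
      (by omega) (by omega) (by omega) rfl
  have hSEG : Rch A (sg, wd (α₁ + d) (m₁ + 2 * d) false) (sg, wd α₂ (m₁ + d) false) := by
    rcases det_confluence hdet C₁ C₂ ⟨q₀, _, _, _, rfl⟩ with h | h
    · exact h
    · have := (reach_counts h).2.1
      omega
  have hle : α₂ ≤ α₁ + d := (reach_counts hSEG).1
  obtain ⟨ε, hε⟩ : ∃ ε, α₁ + d = α₂ + ε := ⟨α₁ + d - α₂, by omega⟩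
  -- pump the loop once on the word a^(m₁+d+ε) b^(2m₁+3d)
  have P : Rch A (q₀, wd (m₁ + d + ε) (2 * m₁ + 3 * d) false)
      (sg, wd (α₁ + d + ε) (m₁ + 3 * d) false) :=
    rch_congr (preB pre₁ hao₁ hb₁ hδ₁ (d + ε) (m₁ + 3 * d) (fun _ => hα₁))
      (by omega) (by omega) (by omega) rfl
  have SEGrep : Rch A (sg, wd (α₁ + d + ε) (m₁ + 3 * d) false)
      (sg, wd (α₁ + d) (m₁ + 2 * d) false) :=
    rch_congr (couple ε d (fun _ => hα₂) (fun _ => by omega) hSEG sg (α₁ + d) (m₁ + 2 * d) rfl)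
      (by omega) (by omega) (by omega) (by omega)
  -- terminal of the original word
  obtain ⟨r, xr, yr, er, hrT, hT⟩ := exists_term q₀ (m₁ + d) (2 * m₁ + 2 * d) false
  have tail : Rch A (sg, wd α₂ (m₁ + d) false) (r, wd xr yr er) :=
    det_to_term hdet hT C₂ hrT ⟨q₀, _, _, _, rfl⟩
  have hacc := accept_iff hdet hI hrT hT
  rw [hlang, wd_mem_Lvc_false] at hacc
  have hSF := hacc.mp (by omega)
  -- the pumped word is accepted
  have pumped := accept_iff hdet hI (((P.trans SEGrep).trans hSEG).trans tail) hT
  rw [hlang, wd_mem_Lvc_false] at pumped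
  have h2ε : 2 * (m₁ + d + ε) = 2 * m₁ + 3 * d := pumped.mpr hSF
  have hde : d = 2 * ε := by omega
  have hε1 : 1 ≤ ε := by omega
  have hα : α₂ = α₁ + ε := by omega
  -- AccV contradiction
  have D₂ : Rch A (q₀, wd (m₁ + d) (m₁ + d) false) (sg, wd α₂ 0 false) :=
    rch_congr (preB pre₂ hao₂ hb₂ hδ₂ 0 0 (by omega)) (by omega) (by omega) (by omega) rfl
  have D₂t := mapc D₂ q₀ (m₁ + d) (m₁ + d) sg α₂ 0 rfl rfl
  have hTrue := (ACC2 hdet hI hlang D₂t).mp ((wd_mem_Lvc_true _ _).mpr rfl)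
  have D₁ : Rch A (q₀, wd (m₁ + ε) m₁ false) (sg, wd (α₁ + ε) 0 false) :=
    rch_congr (preB pre₁ hao₁ hb₁ hδ₁ ε 0 (fun _ => hα₁)) rfl (by omega) rfl rfl
  have D₁t := mapc D₁ q₀ (m₁ + ε) m₁ sg (α₁ + ε) 0 rfl rfl
  have hFalse := (ACC2 hdet hI hlang D₁t).mpr (hα ▸ hTrue)
  rw [wd_mem_Lvc_true] at hFalse
  omega

end LvcProof
/-- L_{∨,c} is not accepted by any DFAwtl. -/
theorem Lvc_not_DFAwtl : Lvc ∉ DFAwtlLangs Al := by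
  rintro ⟨Q, hQfin, A, hdet, hlang⟩
  classical
  haveI := hQfin
  obtain ⟨q₀, hI⟩ := hdet.1
  have hdiag : ∀ m : ℕ, ∃ σ' α σ, (1 ≤ m →
      (LvcProof.Rch A (q₀, LvcProof.wd m m false) (σ', LvcProof.wd α 1 false) ∧
       (α = 0 ∨ Al.a ∈ A.τ σ') ∧ Al.b ∉ A.τ σ' ∧ σ ∈ A.δ σ' Al.b)) := by
    intro m
    by_cases hm : 1 ≤ m
    · obtain ⟨σ', α, σ, h1, h2, h3, h4⟩ := LvcProof.diag hdet hI hlang m hm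
      exact ⟨σ', α, σ, fun _ => ⟨h1, h2, h3, h4⟩⟩
    · exact ⟨q₀, 0, q₀, fun h => absurd h hm⟩
  choose σ'f αf σf hdata using hdiag
  have key : ∀ m₁ m₂ : ℕ, 1 ≤ m₁ → m₁ < m₂ → σf m₁ = σf m₂ →
      ((αf m₁ = 0) ↔ (αf m₂ = 0)) → False := by
    intro m₁ m₂ h1 hlt hσ hαiff
    obtain ⟨p1, pa1, pb1, pd1⟩ := hdata m₁ (by omega)
    obtain ⟨p2, pa2, pb2, pd2⟩ := hdata m₂ (by omega)
    rw [hσ] at pd1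
    by_cases hz : αf m₁ = 0
    · have hz2 : αf m₂ = 0 := hαiff.mp hz
      rw [hz] at p1
      rw [hz2] at p2
      exact LvcProof.caseB hdet hI hlang hlt p1 pb1 pd1 p2 pb2 pd2
    · have hz2 : ¬ αf m₂ = 0 := fun h => hz (hαiff.mpr h)
      exact LvcProof.caseA hdet hI hlang hlt (by omega) (by omega)
        p1 pa1 pb1 pd1 p2 pa2 pb2 pd2
  obtain ⟨m, n, hmn, hg⟩ := Finite.exists_ne_map_eq_of_infinite
    (fun k : ℕ => (σf (k + 1), decide (αf (k + 1) = 0)))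
  obtain ⟨hg1, hg2⟩ := Prod.mk.injEq _ _ _ _ ▸ hg
  rcases Nat.lt_or_ge m n with h | h
  · exact key (m + 1) (n + 1) (by omega) (by omega) hg1 (decide_eq_decide.mp hg2)
  · have hnm : n < m := by omega
    exact key (n + 1) (m + 1) (by omega) (by omega) hg1.symm
      (decide_eq_decide.mp hg2).symm
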